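/- Let r ≥ 4 and fix i ∈ [r]. Let M_even − x_i and M_odd − x_i denote the graphs obtained from M_even and M_odd by deleting the leaf x_i. Then the map f defined by f(u_w) = u_{inv(w,i)}, f(v_{i,0}) = v_{i,1}, f(v_{i,1}) = v_{i,0}, and f fixing all other vertices (v_{j,h} for j ≠ i and x_j for j ≠ i), is a label-preserving graph isomorphism from M_even − x_i to M_odd − x_i. -/

import Mathlib

/-- The weight of a binary sequence: the number of `true` entries. -/
def wt {r : ℕ} (w : Fin r → Bool) : ℕ :=
  (Finset.univ.filter fun j => w j = true).card

/-- Even-weight binary sequences of length `r`. -/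
def Seven (r : ℕ) : Set (Fin r → Bool) := {w | Even (wt w)}

/-- Odd-weight binary sequences of length `r`. -/
def Sodd (r : ℕ) : Set (Fin r → Bool) := {w | Odd (wt w)}

/-- Flip the `i`-th entry of `w`. -/
def inv {r : ℕ} (w : Fin r → Bool) (i : Fin r) : Fin r → Bool :=
  Function.update w i (!w i)

/-- Vertices of the graph `M S`: a vertex `u_w` for each `w ∈ S`,
a vertex `v_{i,h}` for each `i ∈ [r]`, `h ∈ {0,1}`, and a leaf `x_i` for each `i ∈ [r]`. -/
abbrev Vtx (r : ℕ) (S : Set (Fin r → Bool)) :=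
  {w // w ∈ S} ⊕ ((Fin r × Bool) ⊕ Fin r)

/-- The vertex `u_w`. -/
abbrev vtxU {r : ℕ} {S : Set (Fin r → Bool)} (w : Fin r → Bool) (hw : w ∈ S) : Vtx r S :=
  Sum.inl ⟨w, hw⟩

/-- The vertex `v_{i,h}`. -/
abbrev vtxV {r : ℕ} {S : Set (Fin r → Bool)} (i : Fin r) (h : Bool) : Vtx r S :=
  Sum.inr (Sum.inl (i, h))

/-- The labelled leaf `x_i`. -/
abbrev vtxX {r : ℕ} {S : Set (Fin r → Bool)} (i : Fin r) : Vtx r S :=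
  Sum.inr (Sum.inr i)

/-- `u_w` is adjacent to `v_{i,h}` iff `w i = h`; `x_i` is adjacent (only) to `v_{i,0}`. -/
def MRel {r : ℕ} {S : Set (Fin r → Bool)} : Vtx r S → Vtx r S → Prop
  | Sum.inl w, Sum.inr (Sum.inl p) => w.1 p.1 = p.2
  | Sum.inr (Sum.inl p), Sum.inr (Sum.inr j) => p.1 = j ∧ p.2 = false
  | _, _ => False

/-- The graph `M S` (this is `M_even` when `S = Seven r`, and `M_odd` when `S = Sodd r`). -/
def M (r : ℕ) (S : Set (Fin r → Bool)) : SimpleGraph (Vtx r S) :=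
  SimpleGraph.fromRel MRel

/-- The vertex set after deleting the leaf `x_i`. -/
def delX (r : ℕ) (S : Set (Fin r → Bool)) (i : Fin r) : Set (Vtx r S) :=
  {a | a ≠ vtxX i}

/-- The graph `M S` with the leaf `x_i` deleted. -/
def Mdel (r : ℕ) (S : Set (Fin r → Bool)) (i : Fin r) :
    SimpleGraph (delX r S i) :=
  (M r S).induce (delX r S i)

lemma wt_eq_sum {r : ℕ} (w : Fin r → Bool) :
    wt w = ∑ j, if w j = true then 1 else 0 :=
  Finset.card_filter _ _

lemma odd_wt_add {r : ℕ} (w : Fin r → Bool) (i : Fin r) :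
    Odd (wt (inv w i) + wt w) := by
  rw [wt_eq_sum, wt_eq_sum]
  have h1 : (fun j => if inv w i j = true then (1:ℕ) else 0)
      = Function.update (fun j => if w j = true then (1:ℕ) else 0) i
        (if !w i = true then 1 else 0) := by
    funext j
    by_cases hj : j = i <;> simp [inv, Function.update, hj]
  rw [h1, Finset.sum_update_of_mem (Finset.mem_univ i),
    Finset.sum_eq_sum_sdiff_singleton_add (Finset.mem_univ i)
      (fun j => if w j = true then (1:ℕ) else 0)]
  rcases hwi : w i <;> simp [hwi] <;> rw [Nat.odd_iff] <;> omega

lemma mem_sodd_inv {r : ℕ} {w : Fin r → Bool} (i : Fin r) (hw : w ∈ Seven r) :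
    inv w i ∈ Sodd r := by
  have := odd_wt_add w i
  rw [Nat.odd_add] at this
  exact this.mpr hw

lemma mem_seven_inv {r : ℕ} {w : Fin r → Bool} (i : Fin r) (hw : w ∈ Sodd r) :
    inv w i ∈ Seven r := by
  have := odd_wt_add w i
  rw [Nat.odd_add] at this
  exact Nat.not_odd_iff_even.mp fun h => Nat.not_odd_iff_even.mpr (this.mp h) hw

lemma inv_invol {r : ℕ} (w : Fin r → Bool) (i : Fin r) : inv (inv w i) i = w := by
  funext j
  by_cases hj : j = i <;> simp [inv, Function.update, hj]

lemma inv_apply_fin {r : ℕ} (w : Fin r → Bool) (i j : Fin r) :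
    inv w i j = if j = i then !w i else w j := by
  by_cases hj : j = i <;> simp [inv, Function.update, hj]

variable {r : ℕ} (i : Fin r)

/-- flip the bool at index `i` -/
def flipP (i : Fin r) : Fin r × Bool ≃ Fin r × Bool where
  toFun p := if p.1 = i then (p.1, !p.2) else p
  invFun p := if p.1 = i then (p.1, !p.2) else p
  left_inv := by rintro ⟨a, b⟩; by_cases hp : a = i <;> simp [hp]
  right_inv := by rintro ⟨a, b⟩; by_cases hp : a = i <;> simp [hp]

def uEquiv (i : Fin r) : {w // w ∈ Seven r} ≃ {w // w ∈ Sodd r} where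
  toFun w := ⟨inv w.1 i, mem_sodd_inv i w.2⟩
  invFun w := ⟨inv w.1 i, mem_seven_inv i w.2⟩
  left_inv w := by simp [inv_invol]
  right_inv w := by simp [inv_invol]

def vEquiv (i : Fin r) : Vtx r (Seven r) ≃ Vtx r (Sodd r) :=
  Equiv.sumCongr (uEquiv i) (Equiv.sumCongr (flipP i) (Equiv.refl _))

lemma vEquiv_x (j : Fin r) : vEquiv i (vtxX j) = vtxX j := rfl

lemma vEquiv_mem (a : Vtx r (Seven r)) :
    a ∈ delX r (Seven r) i ↔ vEquiv i a ∈ delX r (Sodd r) i := by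
  constructor
  · intro ha hc
    exact ha ((vEquiv i).injective (by rw [hc]; rfl))
  · intro ha hc
    exact ha (by rw [hc]; rfl)

lemma adj_iff (a b : Vtx r (Seven r)) (ha : a ≠ vtxX i) (hb : b ≠ vtxX i) :
    (M r (Sodd r)).Adj (vEquiv i a) (vEquiv i b) ↔ (M r (Seven r)).Adj a b := by
  have hne : vEquiv i a ≠ vEquiv i b ↔ a ≠ b := (vEquiv i).injective.ne_iff
  rcases a with ⟨w, hw⟩ | ⟨j, h⟩ | j <;> rcases b with ⟨w', hw'⟩ | ⟨j', h'⟩ | j' <;>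
    simp only [M, SimpleGraph.fromRel_adj, hne, MRel, vEquiv, Equiv.sumCongr_apply,
      Sum.map_inl, Sum.map_inr, uEquiv, flipP, Equiv.coe_fn_mk, Equiv.coe_refl, id_eq]
  · simp
  · by_cases hj : j' = i <;> simp [hj, inv_apply_fin]
  · simp
  · by_cases hj : j = i <;> simp [hj, inv_apply_fin]
  · simp
  · have hj' : j' ≠ i := by simpa [vtxX] using hb
    by_cases hj : j = i
    · subst hj
      simp [Ne.symm hj']
    · simp [hj]
  · simp
  · have hj0 : j ≠ i := by simpa [vtxX] using ha
    by_cases hj : j' = i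
    · subst hj
      simp [Ne.symm hj0]
    · simp [hj]
  · simp

noncomputable def theIso (i : Fin r) : Mdel r (Seven r) i ≃g Mdel r (Sodd r) i where
  toEquiv := (vEquiv i).subtypeEquiv (vEquiv_mem i)
  map_rel_iff' := by
    rintro ⟨a, ha⟩ ⟨b, hb⟩
    exact adj_iff i a b ha hb

theorem Mdel_explicit_iso (r : ℕ) (hr : 4 ≤ r) (i : Fin r) :
    ∃ φ : Mdel r (Seven r) i ≃g Mdel r (Sodd r) i,
      (∀ (w : Fin r → Bool) (hw : w ∈ Seven r) (hw' : inv w i ∈ Sodd r),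
        φ ⟨vtxU w hw, by simp [delX, vtxU, vtxX]⟩ =
          ⟨vtxU (inv w i) hw', by simp [delX, vtxU, vtxX]⟩) ∧
      (∀ h : Bool,
        φ ⟨vtxV i h, by simp [delX, vtxV, vtxX]⟩ =
          ⟨vtxV i (!h), by simp [delX, vtxV, vtxX]⟩) ∧
      (∀ (j : Fin r) (h : Bool), j ≠ i →
        φ ⟨vtxV j h, by simp [delX, vtxV, vtxX]⟩ =
          ⟨vtxV j h, by simp [delX, vtxV, vtxX]⟩) ∧
      (∀ (j : Fin r) (hj : j ≠ i),
        φ ⟨vtxX j, by simp [delX, vtxX, hj]⟩ =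
          ⟨vtxX j, by simp [delX, vtxX, hj]⟩) := by
  
  refine ⟨theIso i, ?_, ?_, ?_, ?_⟩
  · intro w hw hw'
    rfl
  · intro h
    simp [theIso, vEquiv, flipP]
  · intro j h hj
    simp [theIso, vEquiv, flipP, hj]
  · intro j hj
    rfl
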